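/- For any real numbers a, b, α, β, if both (a+α)+(b+β) mod-1 representatives and (a+β)+(b+α) mod-1 representatives (i.e., the sums of fractional parts frac(a+α)+frac(b+β) and frac(a+β)+frac(b+α)) lie in the interval [1/2, 3/2), then frac(a+α)+frac(b+β) = frac(a+β)+frac(b+α). -/
import Mathlib

theorem psi_swap_invariant (a b α β : ℝ)
    (h1 : Int.fract (a + α) + Int.fract (b + β) ∈ Set.Ico (1/2 : ℝ) (3/2))
    (h2 : Int.fract (a + β) + Int.fract (b + α) ∈ Set.Ico (1/2 : ℝ) (3/2)) :
    Int.fract (a + α) + Int.fract (b + β) = Int.fract (a + β) + Int.fract (b + α) := by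
  obtain ⟨l1, u1⟩ := h1
  obtain ⟨l2, u2⟩ := h2
  have key : Int.fract (a + α) + Int.fract (b + β) -
      (Int.fract (a + β) + Int.fract (b + α)) =
      ((⌊a + β⌋ + ⌊b + α⌋ - ⌊a + α⌋ - ⌊b + β⌋ : ℤ) : ℝ) := by
    unfold Int.fract
    push_cast
    ring
  set n : ℤ := ⌊a + β⌋ + ⌊b + α⌋ - ⌊a + α⌋ - ⌊b + β⌋ with hn
  have h3 : (n : ℝ) < 1 := by linarith
  have h4 : (-1 : ℝ) < n := by linarith
  have h3' : n < 1 := by exact_mod_cast h3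
  have h4' : -1 < n := by exact_mod_cast h4
  have : n = 0 := by omega
  rw [this] at key
  push_cast at key
  linarith
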